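/- Assume α < 0 < β, so that l1 < l2. Define b(t) = −a(t)/(t + l2/(l1−l2)) for t ∈ [0,1). Then for every t ∈ [0,1): a_min·(l2−l1)/l2 ≤ a(t)·(l2−l1)/l2 ≤ b(t) ≤ a(t)·(l2−l1)/l1 ≤ a_max·(l2−l1)/l1, where a_min and a_max denote the minimum and maximum of a over one period. In particular b is bounded above and below by positive constants on [0,1). -/

import Mathlib

/-- with `α < 0 < β` (so `l1 < l2`) and `b(t) = -a(t)/(t + l2/(l1-l2))`,
for every `t ∈ [0,1)`:
`a_min(l2-l1)/l2 ≤ a(t)(l2-l1)/l2 ≤ b(t) ≤ a(t)(l2-l1)/l1 ≤ a_max(l2-l1)/l1`,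
where `a_min`, `a_max` are the minimum and maximum of `a` over one period;
in particular `b` is bounded above and below by positive constants on `[0,1)`. -/
theorem stmt5 (α β : ℝ) (hα : α ∈ Set.Ioo (-1 : ℝ) 1) (hβ : β ∈ Set.Ioo (-1 : ℝ) 1)
    (hαβ : α ≠ β) (hsign : α < 0 ∧ 0 < β)
    (l1 l2 : ℝ) (hl1 : l1 = (1 + α) / (1 - α)) (hl2 : l2 = (1 + β) / (1 - β))
    (a : ℝ → ℝ) (ha_cont : Continuous a) (ha_per : Function.Periodic a 1)
    (ha_pos : ∀ t, 0 < a t)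
    (ha1 : ∀ t : ℝ, α * (1 + β) / (2 * (α - β)) ≤ t →
      t ≤ (α * (1 + β) - 2 * β) / (2 * (α - β)) →
      a t = α * t + α * (1 - α) * (1 + β) / (2 * (α - β)))
    (ha2 : ∀ t : ℝ, (α * (1 + β) - 2 * β) / (2 * (α - β)) ≤ t →
      t ≤ (α * (3 + β) - 2 * β) / (2 * (α - β)) →
      a t = β * t - β + α * (1 - β ^ 2) / (2 * (α - β)))
    (b : ℝ → ℝ) (hb : ∀ t, b t = -a t / (t + l2 / (l1 - l2)))
    (amin amax : ℝ) (hamin : amin = sInf (a '' Set.Icc (0 : ℝ) 1))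
    (hamax : amax = sSup (a '' Set.Icc (0 : ℝ) 1)) :
    l1 < l2 ∧
    (∀ t ∈ Set.Ico (0 : ℝ) 1,
      amin * (l2 - l1) / l2 ≤ a t * (l2 - l1) / l2 ∧
      a t * (l2 - l1) / l2 ≤ b t ∧
      b t ≤ a t * (l2 - l1) / l1 ∧
      a t * (l2 - l1) / l1 ≤ amax * (l2 - l1) / l1) ∧
    (∃ c C : ℝ, 0 < c ∧ 0 < C ∧ ∀ t ∈ Set.Ico (0 : ℝ) 1, c ≤ b t ∧ b t ≤ C) := by

  obtain ⟨hα0, hβ0⟩ := hsign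
  have hα1 : -1 < α := hα.1
  have hβ1 : β < 1 := hβ.2
  have hl1pos : 0 < l1 := by rw [hl1]; exact div_pos (by linarith) (by linarith)
  have hl1lt1 : l1 < 1 := by
    rw [hl1, div_lt_one (by linarith)]; linarith
  have hl2gt1 : 1 < l2 := by
    rw [hl2, lt_div_iff₀ (by linarith)]; linarith
  have hl12 : l1 < l2 := lt_trans hl1lt1 hl2gt1
  have hs : 0 < l2 - l1 := by linarith
  have hl2pos : 0 < l2 := by linarith
  -- compactness facts
  have hK : IsCompact (a '' Set.Icc (0 : ℝ) 1) :=
    (isCompact_Icc).image ha_cont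
  have hne : (a '' Set.Icc (0 : ℝ) 1).Nonempty :=
    ⟨a 0, ⟨0, ⟨le_refl _, by norm_num⟩, rfl⟩⟩
  have hbdB := hK.bddBelow
  have hbdA := hK.bddAbove
  have haminpos : 0 < amin := by
    rw [hamin]
    obtain ⟨x, -, hx⟩ := hK.sInf_mem hne
    rw [← hx]; exact ha_pos x
  have hamaxpos : 0 < amax := by
    rw [hamax]
    have : a 0 ≤ sSup (a '' Set.Icc (0 : ℝ) 1) :=
      le_csSup hbdA ⟨0, ⟨le_refl _, by norm_num⟩, rfl⟩
    linarith [ha_pos 0]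
  have key : ∀ t ∈ Set.Ico (0 : ℝ) 1,
      amin * (l2 - l1) / l2 ≤ a t * (l2 - l1) / l2 ∧
      a t * (l2 - l1) / l2 ≤ b t ∧
      b t ≤ a t * (l2 - l1) / l1 ∧
      a t * (l2 - l1) / l1 ≤ amax * (l2 - l1) / l1 := by
    intro t ht
    obtain ⟨ht0, ht1⟩ := ht
    have hmem : a t ∈ a '' Set.Icc (0 : ℝ) 1 := ⟨t, ⟨ht0, le_of_lt ht1⟩, rfl⟩
    have hmin : amin ≤ a t := by rw [hamin]; exact csInf_le hbdB hmem
    have hmax : a t ≤ amax := by rw [hamax]; exact le_csSup hbdA hmem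
    set D : ℝ := l2 / (l2 - l1) - t with hD
    have hsum : l1 / (l2 - l1) + 1 = l2 / (l2 - l1) := by
      field_simp
      ring
    have hDgt : l1 / (l2 - l1) ≤ D := by
      have : l1 / (l2 - l1) + t < l2 / (l2 - l1) := by
        rw [← hsum]; linarith
      simp only [hD]; linarith
    have hl1div : 0 < l1 / (l2 - l1) := div_pos hl1pos hs
    have hDpos : 0 < D := lt_of_lt_of_le hl1div hDgt
    have hDle : D ≤ l2 / (l2 - l1) := by simp only [hD]; linarith
    have hbt : b t = a t / D := by
      rw [hb]
      have h1 : l1 - l2 = -(l2 - l1) := by ring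
      rw [h1, div_neg]
      have h2 : t + -(l2 / (l2 - l1)) = -D := by simp only [hD]; ring
      rw [h2, neg_div_neg_eq]
    have e1 : a t * (l2 - l1) / l2 = a t / (l2 / (l2 - l1)) := by
      rw [div_div_eq_mul_div]
    have e2 : a t * (l2 - l1) / l1 = a t / (l1 / (l2 - l1)) := by
      rw [div_div_eq_mul_div]
    have hapos := ha_pos t
    refine ⟨?_, ?_, ?_, ?_⟩
    · gcongr
    · rw [hbt, e1]
      exact div_le_div_of_nonneg_left (le_of_lt hapos) hDpos hDle
    · rw [hbt, e2]
      exact div_le_div_of_nonneg_left (le_of_lt hapos) hl1div hDgt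
    · gcongr
  refine ⟨hl12, key, amin * (l2 - l1) / l2, amax * (l2 - l1) / l1,
    by positivity, by positivity, ?_⟩
  intro t ht
  obtain ⟨h1, h2, h3, h4⟩ := key t ht
  exact ⟨le_trans h1 h2, le_trans h3 h4⟩
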